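/- Explicit coefficient formula for the second kind: the coefficient of x^j in D̂_n(x|a_1,…,a_r) equals ∑_{l=j}^n C(n,l) S_1(l,j) D̂_{n-l}(a_1,…,a_r). -/

import Mathlib

open Finset PowerSeries

/-- Exponential generating function: `∑ f n * t^n / n!`. -/
noncomputable def egf (f : ℕ → ℚ) : PowerSeries ℚ :=
  PowerSeries.mk fun n => f n / n.factorial

/-- The formal power series `log(1+t) = ∑_{m≥1} (-1)^{m-1} t^m / m`. -/
noncomputable def log1p : PowerSeries ℚ :=
  PowerSeries.mk fun n => if n = 0 then 0 else (-1) ^ (n - 1) / n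

/-- Formal exponential composition: for `f` with zero constant term this is
`exp(f) = ∑_k f^k / k!` (the sum in each coefficient is finite). -/
noncomputable def expPS (f : PowerSeries ℚ) : PowerSeries ℚ :=
  PowerSeries.mk fun n =>
    ∑ k ∈ Finset.range (n + 1), (PowerSeries.coeff n (f ^ k)) / k.factorial

/-- `(1+t)^a := exp(a · log(1+t))` as a formal power series. -/
noncomputable def onePow (a : ℚ) : PowerSeries ℚ := expPS (PowerSeries.C a * log1p)

/-- `e^{a t} = ∑ a^n t^n / n!`. -/
noncomputable def expAt (a : ℚ) : PowerSeries ℚ :=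
  PowerSeries.mk fun n => a ^ n / n.factorial

/-- Falling factorial `(x)_n = x(x-1)⋯(x-n+1)`. -/
noncomputable def ffall (x : ℚ) (n : ℕ) : ℚ := ∏ i ∈ Finset.range n, (x - i)

lemma constantCoeff_log1p : PowerSeries.constantCoeff log1p = 0 := by
  simp [log1p, ← PowerSeries.coeff_zero_eq_constantCoeff]
lemma coeff_pow_eq_zero {f : PowerSeries ℚ} (hf : PowerSeries.constantCoeff f = 0)
    {n k : ℕ} (h : n < k) : PowerSeries.coeff n (f ^ k) = 0 := by
  have : (PowerSeries.X : PowerSeries ℚ) ^ k ∣ f ^ k :=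
    pow_dvd_pow_of_dvd (PowerSeries.X_dvd_iff.mpr hf) k
  exact PowerSeries.X_pow_dvd_iff.mp this n h
lemma coeff_derivativeFun' (f : PowerSeries ℚ) (n : ℕ) :
    PowerSeries.coeff n f.derivativeFun = PowerSeries.coeff (n+1) f * (n+1) :=
  PowerSeries.coeff_derivative f n
lemma deriv_log1p : PowerSeries.derivativeFun log1p = PowerSeries.mk fun m => (-1 : ℚ) ^ m := by
  ext m
  rw [coeff_derivativeFun']
  simp [log1p]
  field_simp
lemma one_add_X_mul_deriv_log1p :
    (1 + PowerSeries.X) * PowerSeries.derivativeFun log1p = 1 := by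
  rw [deriv_log1p]
  ext m
  cases m with
  | zero => simp [add_mul]
  | succ m =>
    rw [add_mul, one_mul, map_add, PowerSeries.coeff_succ_X_mul]
    simp [pow_succ]
lemma log1p_pow_rec (k m : ℕ) :
    ((m:ℚ)+1) * PowerSeries.coeff (m+1) (log1p^(k+1)) + (m:ℚ) * PowerSeries.coeff m (log1p^(k+1))
    = ((k:ℚ)+1) * PowerSeries.coeff m (log1p^k) := by
  have hd : PowerSeries.derivativeFun (log1p^(k+1)) =
      ((k+1 : ℕ) : PowerSeries ℚ) * (log1p ^ k * PowerSeries.derivativeFun log1p) := by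
    have h0 : (PowerSeries.derivative ℚ) (log1p^(k+1)) = PowerSeries.derivativeFun (log1p^(k+1)) := rfl
    have h1 : (PowerSeries.derivative ℚ) log1p = PowerSeries.derivativeFun log1p := rfl
    have hl := Derivation.leibniz_pow (PowerSeries.derivative ℚ) (a := log1p) (k+1)
    rw [h0, h1] at hl
    rw [hl]
    simp [nsmul_eq_mul, smul_eq_mul, mul_assoc]
  have hD : (1 + PowerSeries.X) * PowerSeries.derivativeFun (log1p^(k+1)) =
      ((k+1 : ℕ) : PowerSeries ℚ) * log1p ^ k := by
    rw [hd]
    have hr : (1 + PowerSeries.X) * (((k+1:ℕ):PowerSeries ℚ) * (log1p ^ k * PowerSeries.derivativeFun log1p))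
        = ((k+1:ℕ):PowerSeries ℚ) * (log1p ^ k * ((1 + PowerSeries.X) * PowerSeries.derivativeFun log1p)) := by
      ring
    rw [hr, one_add_X_mul_deriv_log1p, mul_one]
  have h2 := congrArg (PowerSeries.coeff m) hD
  rw [add_mul, one_mul, map_add] at h2
  have hnat : ((k+1 : ℕ) : PowerSeries ℚ) = PowerSeries.C ((k:ℚ)+1) := by
    push_cast; simp [map_add, map_one]
  rw [hnat, PowerSeries.coeff_C_mul] at h2
  cases m with
  | zero =>
    rw [PowerSeries.coeff_zero_X_mul] at h2
    rw [coeff_derivativeFun'] at h2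
    push_cast at h2 ⊢
    linarith [h2]
  | succ m =>
    rw [PowerSeries.coeff_succ_X_mul, coeff_derivativeFun',
      coeff_derivativeFun'] at h2
    push_cast at h2 ⊢
    linarith [h2]
lemma coeff_onePow (x : ℚ) (n : ℕ) :
    PowerSeries.coeff n (onePow x)
      = ∑ k ∈ Finset.range (n+1), x^k * PowerSeries.coeff n (log1p^k) / k.factorial := by
  simp only [onePow, expPS, PowerSeries.coeff_mk]
  refine Finset.sum_congr rfl fun k _ => ?_
  rw [mul_pow, ← map_pow, PowerSeries.coeff_C_mul]
lemma coeff_onePow_eq (x : ℚ) (n : ℕ) :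
    PowerSeries.coeff n (onePow x) = ffall x n / n.factorial := by
  induction n with
  | zero => simp [coeff_onePow, ffall]
  | succ n ih =>
    set L : ℕ → ℕ → ℚ := fun m k => PowerSeries.coeff m (log1p ^ k) with hLdef
    have key : ((n:ℚ)+1) * PowerSeries.coeff (n+1) (onePow x)
        = (x - n) * PowerSeries.coeff n (onePow x) := by
      have hT : ∑ i ∈ Finset.range (n+1), x^(i+1) * L n (i+1) / (i+1).factorial
          = PowerSeries.coeff n (onePow x) - L n 0 := by
        have h1 := Finset.sum_range_succ' (fun k => x^k * L n k / k.factorial) (n+1)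
        have h2 : ∑ k ∈ Finset.range (n+2), x^k * L n k / k.factorial
            = ∑ k ∈ Finset.range (n+1), x^k * L n k / k.factorial := by
          rw [Finset.sum_range_succ]
          have hz : L n (n+1) = 0 := coeff_pow_eq_zero constantCoeff_log1p (Nat.lt_succ_self n)
          rw [hz]; ring
        rw [coeff_onePow]
        rw [h2] at h1
        simp only [pow_zero, Nat.factorial_zero, Nat.cast_one, one_mul, div_one] at h1
        linarith [h1]
      calc ((n:ℚ)+1) * PowerSeries.coeff (n+1) (onePow x)
          = ∑ k ∈ Finset.range (n+2), ((n:ℚ)+1) * (x^k * L (n+1) k / k.factorial) := by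
            rw [coeff_onePow, Finset.mul_sum]
        _ = ∑ i ∈ Finset.range (n+1), ((n:ℚ)+1) * (x^(i+1) * L (n+1) (i+1) / (i+1).factorial)
              + ((n:ℚ)+1) * (x^0 * L (n+1) 0 / (0:ℕ).factorial) :=
            Finset.sum_range_succ' _ (n+1)
        _ = ∑ i ∈ Finset.range (n+1), ((n:ℚ)+1) * (x^(i+1) * L (n+1) (i+1) / (i+1).factorial) := by
            have h0 : L (n+1) 0 = 0 := by
              simp [hLdef, PowerSeries.coeff_one]
            rw [h0]; simp
        _ = ∑ i ∈ Finset.range (n+1),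
              (x * (x^i * L n i / i.factorial) - (n:ℚ) * (x^(i+1) * L n (i+1) / (i+1).factorial)) := by
            refine Finset.sum_congr rfl fun i _ => ?_
            have hrec := log1p_pow_rec i n
            have hn1 : ((n:ℚ)+1) ≠ 0 := by positivity
            have h3 : L (n+1) (i+1) = (((i:ℚ)+1) * L n i - (n:ℚ) * L n (i+1)) / ((n:ℚ)+1) := by
              rw [hLdef]
              field_simp
              linarith [hrec]
            have hfac : ((i+1).factorial : ℚ) = ((i:ℚ)+1) * (i.factorial : ℚ) := by
              rw [Nat.factorial_succ]; push_cast; ring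
            have hif : (i.factorial : ℚ) ≠ 0 := by exact_mod_cast Nat.factorial_ne_zero i
            have hi1 : ((i:ℚ)+1) ≠ 0 := by positivity
            rw [h3, hfac]
            field_simp
            ring
        _ = x * PowerSeries.coeff n (onePow x)
              - (n:ℚ) * (PowerSeries.coeff n (onePow x) - L n 0) := by
            rw [Finset.sum_sub_distrib, ← Finset.mul_sum, ← Finset.mul_sum, hT, ← coeff_onePow]
        _ = (x - n) * PowerSeries.coeff n (onePow x) := by
            have h4 : (n:ℚ) * L n 0 = 0 := by
              cases n with
              | zero => simp
              | succ m => simp [hLdef, PowerSeries.coeff_one]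
            linear_combination h4
    have hne : ((n:ℚ)+1) ≠ 0 := by positivity
    have hf : ffall x (n+1) = (x - n) * ffall x n := by
      rw [ffall, Finset.prod_range_succ, ← ffall]; ring
    have hfac : ((n+1).factorial : ℚ) = ((n:ℚ)+1) * (n.factorial : ℚ) := by
      rw [Nat.factorial_succ]; push_cast; ring
    have hnf : (n.factorial : ℚ) ≠ 0 := by exact_mod_cast Nat.factorial_ne_zero n
    rw [ih] at key
    rw [hf, hfac]
    field_simp at key ⊢
    linarith [key]
lemma onePow_zero' : onePow 0 = 1 := by
  ext n
  rw [coeff_onePow_eq]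
  cases n with
  | zero => simp [ffall]
  | succ m =>
    have h : ffall 0 (m+1) = 0 := by
      rw [ffall]
      exact Finset.prod_eq_zero (Finset.mem_range.mpr (Nat.succ_pos m)) (by simp)
    rw [h]
    simp [PowerSeries.coeff_one]
lemma onePow_sub_one_ne_zero {a : ℚ} (ha : a ≠ 0) : onePow a - 1 ≠ 0 := by
  intro h
  have h1 : PowerSeries.coeff 1 (onePow a - 1) = a := by
    rw [map_sub, coeff_onePow_eq]
    simp [ffall, PowerSeries.coeff_one]
  rw [h] at h1
  simp at h1
  exact ha h1.symm

theorem stmt19 (r : ℕ) (a : Fin r → ℚ) (ha : ∀ j, a j ≠ 0) (Dh : ℕ → Polynomial ℚ)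
    (hDh : ∀ x : ℚ, (∏ j, (onePow (a j) - 1)) * egf (fun n => (Dh n).eval x) = (∏ j, onePow (a j)) * log1p ^ r * onePow x)
    (S1 : ℕ → ℕ → ℚ) (hS1 : ∀ (l : ℕ) (x : ℚ), ffall x l = ∑ j ∈ Finset.range (l + 1), S1 l j * x ^ j)
    (n j : ℕ) :
    (Dh n).coeff j = ∑ l ∈ Finset.Icc j n, (n.choose l : ℚ) * S1 l j * (Dh (n - l)).eval 0 := by
  classical
  have hFne : (∏ j, (onePow (a j) - 1)) ≠ 0 :=
    Finset.prod_ne_zero_iff.mpr fun i _ => onePow_sub_one_ne_zero (ha i)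
  have hegf : ∀ x : ℚ, egf (fun n => (Dh n).eval x) = egf (fun n => (Dh n).eval 0) * onePow x := by
    intro x
    have h1 := hDh x
    have h0 := hDh 0
    rw [onePow_zero', mul_one] at h0
    apply mul_left_cancel₀ hFne
    calc (∏ j, (onePow (a j) - 1)) * egf (fun n => (Dh n).eval x)
        = (∏ j, onePow (a j)) * log1p ^ r * onePow x := h1
      _ = ((∏ j, (onePow (a j) - 1)) * egf (fun n => (Dh n).eval 0)) * onePow x := by rw [h0]
      _ = (∏ j, (onePow (a j) - 1)) * (egf (fun n => (Dh n).eval 0) * onePow x) := by ring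
  have heval : ∀ x : ℚ, (Dh n).eval x
      = ∑ l ∈ Finset.range (n+1), (n.choose l : ℚ) * ffall x l * (Dh (n - l)).eval 0 := by
    intro x
    have h := congrArg (PowerSeries.coeff n) (hegf x)
    rw [mul_comm, PowerSeries.coeff_mul, Finset.Nat.sum_antidiagonal_eq_sum_range_succ_mk] at h
    simp only [egf, PowerSeries.coeff_mk, coeff_onePow_eq] at h
    have hnf : ((n.factorial : ℚ)) ≠ 0 := by exact_mod_cast n.factorial_ne_zero
    have h2 : (Dh n).eval x = (n.factorial : ℚ) * ∑ l ∈ Finset.range (n+1),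
        ffall x l / l.factorial * ((Dh (n - l)).eval 0 / (n - l).factorial) := by
      rw [← h]; field_simp
    rw [h2, Finset.mul_sum]
    refine Finset.sum_congr rfl fun l hl => ?_
    have hln : l ≤ n := Nat.lt_succ_iff.mp (Finset.mem_range.mp hl)
    rw [Nat.cast_choose ℚ hln]
    have hl1 : ((l.factorial : ℚ)) ≠ 0 := by exact_mod_cast l.factorial_ne_zero
    have hl2 : (((n-l).factorial : ℚ)) ≠ 0 := by exact_mod_cast (n-l).factorial_ne_zero
    field_simp
  set Q : Polynomial ℚ := ∑ j' ∈ Finset.range (n+1),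
      Polynomial.C (∑ l ∈ Finset.Icc j' n, (n.choose l : ℚ) * S1 l j' * (Dh (n - l)).eval 0)
        * Polynomial.X ^ j' with hQ
  have hDQ : Dh n = Q := by
    apply Polynomial.funext
    intro x
    rw [heval x, hQ]
    have hQx : Polynomial.eval x (∑ j' ∈ Finset.range (n+1),
        Polynomial.C (∑ l ∈ Finset.Icc j' n, (n.choose l : ℚ) * S1 l j' * (Dh (n - l)).eval 0)
          * Polynomial.X ^ j')
        = ∑ j' ∈ Finset.range (n+1),
          (∑ l ∈ Finset.Icc j' n, (n.choose l : ℚ) * S1 l j' * (Dh (n - l)).eval 0) * x ^ j' := by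
      rw [Polynomial.eval_finset_sum]
      refine Finset.sum_congr rfl fun j' _ => ?_
      rw [Polynomial.eval_mul, Polynomial.eval_C, Polynomial.eval_pow, Polynomial.eval_X]
    rw [hQx]
    calc ∑ l ∈ Finset.range (n+1), (n.choose l : ℚ) * ffall x l * (Dh (n - l)).eval 0
        = ∑ l ∈ Finset.range (n+1), ∑ j' ∈ Finset.range (l+1),
            (n.choose l : ℚ) * S1 l j' * (Dh (n - l)).eval 0 * x ^ j' := by
          refine Finset.sum_congr rfl fun l _ => ?_
          rw [hS1 l x, Finset.mul_sum, Finset.sum_mul]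
          refine Finset.sum_congr rfl fun j' _ => by ring
      _ = ∑ j' ∈ Finset.range (n+1), ∑ l ∈ Finset.Icc j' n,
            (n.choose l : ℚ) * S1 l j' * (Dh (n - l)).eval 0 * x ^ j' := by
          refine Finset.sum_comm' fun l j' => ?_
          simp only [Finset.mem_range, Finset.mem_Icc]
          omega
      _ = ∑ j' ∈ Finset.range (n+1),
            (∑ l ∈ Finset.Icc j' n, (n.choose l : ℚ) * S1 l j' * (Dh (n - l)).eval 0) * x ^ j' := by
          refine Finset.sum_congr rfl fun j' _ => ?_
          rw [Finset.sum_mul]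
  rw [hDQ, hQ, Polynomial.finset_sum_coeff]
  simp only [Polynomial.coeff_C_mul, Polynomial.coeff_X_pow, mul_ite, mul_one, mul_zero]
  rw [Finset.sum_ite_eq]
  by_cases hjn : j ∈ Finset.range (n+1)
  · rw [if_pos hjn]
  · rw [if_neg hjn]
    rw [Finset.Icc_eq_empty (by simp at hjn; omega), Finset.sum_empty]
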